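/- Let A, B, C and A', B', C' be two triangles (noncollinear triples) in EuclideanSpace ℝ (Fin 2) whose corresponding bisector lengths coincide: t_A = t_{A'}, t_B = t_{B'}, t_C = t_{C'}. Then the triangles are congruent, i.e. dist B C = dist B' C', dist C A = dist C' A', and dist A B = dist A' B'. (A triangle is determined up to isometry by the three lengths of its internal angle bisectors.) -/

import Mathlib

open EuclideanGeometry Real

section BisectorAux

open RealInnerProductSpace

/-- Auxiliary strictly increasing function on `(0,1)` controlling bisector lengths. -/
noncomputable def psiAux (t : ℝ) : ℝ := t / ((1 - t) * (1 + t) ^ 2)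

lemma psiAux_pos {t : ℝ} (h0 : 0 < t) (h1 : t < 1) : 0 < psiAux t := by
  unfold psiAux
  have : (0:ℝ) < 1 - t := by linarith
  positivity

lemma psiAux_lt {u v : ℝ} (hu : 0 < u) (hv : v < 1) (huv : u < v) :
    psiAux u < psiAux v := by
  have hu1 : u < 1 := huv.trans hv
  have hv0 : 0 < v := hu.trans huv
  have hd1 : 0 < (1 - u) * (1 + u) ^ 2 := by
    have : (0:ℝ) < 1 - u := by linarith
    positivity
  have hd2 : 0 < (1 - v) * (1 + v) ^ 2 := by
    have : (0:ℝ) < 1 - v := by linarith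
    positivity
  unfold psiAux
  rw [div_lt_div_iff₀ hd1 hd2]
  nlinarith [mul_pos (sub_pos.2 huv)
    (by nlinarith [mul_pos hu hv0] : (0:ℝ) < 1 + u * v + u * v * (u + v))]

lemma psiAux_eq_imp {a b : ℝ} (ha0 : 0 < a) (ha1 : a < 1) (hb0 : 0 < b) (hb1 : b < 1)
    (h : psiAux a = psiAux b) : a = b := by
  by_contra hne
  rcases lt_or_gt_of_ne hne with hlt | hgt
  · exact absurd h (ne_of_lt (psiAux_lt ha0 hb1 hlt))
  · exact absurd h (ne_of_gt (psiAux_lt hb0 ha1 hgt))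

lemma ravi_contra (u v w u' v' w' c0 c0' : ℝ)
    (hu0 : 0 < u) (hu1 : u < 1) (hv0 : 0 < v) (hv1 : v < 1) (hw0 : 0 < w) (hw1 : w < 1)
    (hu0' : 0 < u') (hu1' : u' < 1) (hv0' : 0 < v') (hv1' : v' < 1) (hw0' : 0 < w') (hw1' : w' < 1)
    (hsum : u + v + w = 1) (hsum' : u' + v' + w' = 1)
    (hc0 : 0 < c0) (hcc : c0 < c0')
    (E1 : psiAux u * c0 = psiAux u' * c0')
    (E2 : psiAux v * c0 = psiAux v' * c0')
    (E3 : psiAux w * c0 = psiAux w' * c0') : False := by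
  have key : ∀ a b : ℝ, 0 < a → a < 1 → 0 < b → b < 1 → psiAux a * c0 = psiAux b * c0' → b < a := by
    intro a b ha0 ha1 hb0 hb1 E
    have hpb : 0 < psiAux b := psiAux_pos hb0 hb1
    have hlt : psiAux b < psiAux a := by
      have h' : psiAux b * c0 < psiAux a * c0 := by nlinarith
      exact lt_of_mul_lt_mul_right h' hc0.le
    by_contra hle
    push_neg at hle
    rcases hle.lt_or_eq with h' | h'
    · exact absurd (psiAux_lt ha0 hb1 h') (lt_asymm hlt)
    · rw [h'] at hlt; exact lt_irrefl _ hlt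
  have k1 := key u u' hu0 hu1 hu0' hu1' E1
  have k2 := key v v' hv0 hv1 hv0' hv1' E2
  have k3 := key w w' hw0 hw1 hw0' hw1' E3
  linarith

lemma ravi_id (X Y Z : ℝ) (hX : 0 < X) (hY : 0 < Y) (hZ : 0 < Z) :
    X * (X + Y) * (X + Z) * (X + Y + Z) / (X + Y + Z + X) ^ 2
      = psiAux (X / (X + Y + Z)) * ((Y + Z) * (Z + X) * (X + Y) / (X + Y + Z)) := by
  have hs : (0:ℝ) < X + Y + Z := by linarith
  have h1 : 1 - X / (X + Y + Z) = (Y + Z) / (X + Y + Z) := by field_simp; ring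
  have h2 : 1 + X / (X + Y + Z) = (X + Y + Z + X) / (X + Y + Z) := by field_simp
  unfold psiAux
  rw [h1, h2]
  have hYZ : (0:ℝ) < Y + Z := by linarith
  have hsX : (0:ℝ) < X + Y + Z + X := by linarith
  field_simp
  ring

lemma ravi_inj (x y z x' y' z' : ℝ) (hx : 0 < x) (hy : 0 < y) (hz : 0 < z)
    (hx' : 0 < x') (hy' : 0 < y') (hz' : 0 < z')
    (h1 : x * (x + y) * (x + z) * (x + y + z) / (x + y + z + x) ^ 2
        = x' * (x' + y') * (x' + z') * (x' + y' + z') / (x' + y' + z' + x') ^ 2)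
    (h2 : y * (y + z) * (y + x) * (y + z + x) / (y + z + x + y) ^ 2
        = y' * (y' + z') * (y' + x') * (y' + z' + x') / (y' + z' + x' + y') ^ 2)
    (h3 : z * (z + x) * (z + y) * (z + x + y) / (z + x + y + z) ^ 2
        = z' * (z' + x') * (z' + y') * (z' + x' + y') / (z' + x' + y' + z') ^ 2) :
    x = x' ∧ y = y' ∧ z = z' := by
  have hs : (0:ℝ) < x + y + z := by linarith
  have hs' : (0:ℝ) < x' + y' + z' := by linarith
  rw [ravi_id x y z hx hy hz, ravi_id x' y' z' hx' hy' hz'] at h1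
  rw [ravi_id y z x hy hz hx, ravi_id y' z' x' hy' hz' hx'] at h2
  rw [ravi_id z x y hz hx hy, ravi_id z' x' y' hz' hx' hy'] at h3
  rw [show y + z + x = x + y + z by ring, show y' + z' + x' = x' + y' + z' by ring] at h2
  rw [show z + x + y = x + y + z by ring, show z' + x' + y' = x' + y' + z' by ring] at h3
  obtain ⟨s, hsdef⟩ : ∃ s : ℝ, x + y + z = s := ⟨_, rfl⟩
  obtain ⟨s', hsdef'⟩ : ∃ t : ℝ, x' + y' + z' = t := ⟨_, rfl⟩
  rw [hsdef] at h1 h2 h3 hs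
  rw [hsdef'] at h1 h2 h3 hs'
  obtain ⟨c0, hc0def⟩ : ∃ c : ℝ, (y + z) * (z + x) * (x + y) / s = c := ⟨_, rfl⟩
  obtain ⟨c0', hc0def'⟩ : ∃ c : ℝ, (y' + z') * (z' + x') * (x' + y') / s' = c := ⟨_, rfl⟩
  have E1 : psiAux (x / s) * c0 = psiAux (x' / s') * c0' := by
    rw [← hc0def, ← hc0def']; linear_combination h1
  have E2 : psiAux (y / s) * c0 = psiAux (y' / s') * c0' := by
    rw [← hc0def, ← hc0def']; linear_combination h2
  have E3 : psiAux (z / s) * c0 = psiAux (z' / s') * c0' := by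
    rw [← hc0def, ← hc0def']; linear_combination h3
  have hu0 : 0 < x / s := div_pos hx hs
  have hv0 : 0 < y / s := div_pos hy hs
  have hw0 : 0 < z / s := div_pos hz hs
  have hu0' : 0 < x' / s' := div_pos hx' hs'
  have hv0' : 0 < y' / s' := div_pos hy' hs'
  have hw0' : 0 < z' / s' := div_pos hz' hs'
  have hu1 : x / s < 1 := (div_lt_one hs).2 (by rw [← hsdef]; linarith)
  have hv1 : y / s < 1 := (div_lt_one hs).2 (by rw [← hsdef]; linarith)
  have hw1 : z / s < 1 := (div_lt_one hs).2 (by rw [← hsdef]; linarith)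
  have hu1' : x' / s' < 1 := (div_lt_one hs').2 (by rw [← hsdef']; linarith)
  have hv1' : y' / s' < 1 := (div_lt_one hs').2 (by rw [← hsdef']; linarith)
  have hw1' : z' / s' < 1 := (div_lt_one hs').2 (by rw [← hsdef']; linarith)
  have hsum : x / s + y / s + z / s = 1 := by
    rw [← add_div, ← add_div, hsdef]; exact div_self hs.ne'
  have hsum' : x' / s' + y' / s' + z' / s' = 1 := by
    rw [← add_div, ← add_div, hsdef']; exact div_self hs'.ne'
  have hyzs : (0:ℝ) < y + z := by linarith
  have hzxs : (0:ℝ) < z + x := by linarith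
  have hxys : (0:ℝ) < x + y := by linarith
  have hyzs' : (0:ℝ) < y' + z' := by linarith
  have hzxs' : (0:ℝ) < z' + x' := by linarith
  have hxys' : (0:ℝ) < x' + y' := by linarith
  have hc0 : 0 < c0 := by rw [← hc0def]; positivity
  have hc0' : 0 < c0' := by rw [← hc0def']; positivity
  rcases lt_trichotomy c0 c0' with hcc | hcc | hcc
  · exact (ravi_contra _ _ _ _ _ _ _ _ hu0 hu1 hv0 hv1 hw0 hw1
      hu0' hu1' hv0' hv1' hw0' hw1' hsum hsum' hc0 hcc E1 E2 E3).elim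
  · have hpsu : psiAux (x / s) = psiAux (x' / s') := by
      apply mul_right_cancel₀ hc0'.ne'
      rw [← hcc] at E1 ⊢; exact E1
    have hpsv : psiAux (y / s) = psiAux (y' / s') := by
      apply mul_right_cancel₀ hc0'.ne'
      rw [← hcc] at E2 ⊢; exact E2
    have hpsw : psiAux (z / s) = psiAux (z' / s') := by
      apply mul_right_cancel₀ hc0'.ne'
      rw [← hcc] at E3 ⊢; exact E3
    have hu := psiAux_eq_imp hu0 hu1 hu0' hu1' hpsu
    have hv := psiAux_eq_imp hv0 hv1 hv0' hv1' hpsv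
    have hw := psiAux_eq_imp hw0 hw1 hw0' hw1' hpsw
    have hu' : x * s' = x' * s := (div_eq_div_iff hs.ne' hs'.ne').1 hu
    have hv' : y * s' = y' * s := (div_eq_div_iff hs.ne' hs'.ne').1 hv
    have hw' : z * s' = z' * s := (div_eq_div_iff hs.ne' hs'.ne').1 hw
    have hcc2 : (y + z) * (z + x) * (x + y) * s' = (y' + z') * (z' + x') * (x' + y') * s := by
      rw [← hc0def, ← hc0def'] at hcc
      exact (div_eq_div_iff hs.ne' hs'.ne').1 hcc
    have e123 : ((y + z) * s') * ((z + x) * s') * ((x + y) * s')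
        = ((y' + z') * s) * ((z' + x') * s) * ((x' + y') * s) := by
      rw [show (y + z) * s' = (y' + z') * s by linarith,
          show (z + x) * s' = (z' + x') * s by linarith,
          show (x + y) * s' = (x' + y') * s by linarith]
    have keyz : (y + z) * (z + x) * (x + y) * s' * (s' ^ 2 - s ^ 2) = 0 := by
      linear_combination e123 - s ^ 2 * hcc2
    have hP : 0 < (y + z) * (z + x) * (x + y) * s' := by positivity
    have hsq : s' ^ 2 - s ^ 2 = 0 := by
      rcases mul_eq_zero.1 keyz with h | h
      · exact absurd h hP.ne'
      · exact h
    have hss : s = s' := by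
      have hfac : (s' - s) * (s' + s) = 0 := by linear_combination hsq
      rcases mul_eq_zero.1 hfac with hf | hf
      · linarith
      · linarith
    refine ⟨?_, ?_, ?_⟩
    · have := hu'; rw [← hss] at this; exact mul_right_cancel₀ hs.ne' this
    · have := hv'; rw [← hss] at this; exact mul_right_cancel₀ hs.ne' this
    · have := hw'; rw [← hss] at this; exact mul_right_cancel₀ hs.ne' this
  · exact (ravi_contra _ _ _ _ _ _ _ _ hu0' hu1' hv0' hv1' hw0' hw1'
      hu0 hu1 hv0 hv1 hw0 hw1 hsum' hsum hc0' hcc E1.symm E2.symm E3.symm).elim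

lemma ravi_of_sides (a b c : ℝ) (ta : a < b + c) (tb : b < c + a) (tc : c < a + b) :
    (b + c - a) * ((b + c - a) + (c + a - b)) * ((b + c - a) + (a + b - c))
        * ((b + c - a) + (c + a - b) + (a + b - c))
        / ((b + c - a) + (c + a - b) + (a + b - c) + (b + c - a)) ^ 2
      = b * c * ((b + c) ^ 2 - a ^ 2) / (b + c) ^ 2 := by
  have h1 : (0:ℝ) < b + c := by linarith
  have h2 : (0:ℝ) < (b + c - a) + (c + a - b) + (a + b - c) + (b + c - a) := by linarith
  field_simp
  ring

lemma sides_eq (a b c a' b' c' : ℝ)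
    (ta : a < b + c) (tb : b < c + a) (tc : c < a + b)
    (ta' : a' < b' + c') (tb' : b' < c' + a') (tc' : c' < a' + b')
    (e1 : b * c * ((b + c) ^ 2 - a ^ 2) / (b + c) ^ 2
        = b' * c' * ((b' + c') ^ 2 - a' ^ 2) / (b' + c') ^ 2)
    (e2 : c * a * ((c + a) ^ 2 - b ^ 2) / (c + a) ^ 2
        = c' * a' * ((c' + a') ^ 2 - b' ^ 2) / (c' + a') ^ 2)
    (e3 : a * b * ((a + b) ^ 2 - c ^ 2) / (a + b) ^ 2
        = a' * b' * ((a' + b') ^ 2 - c' ^ 2) / (a' + b') ^ 2) :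
    a = a' ∧ b = b' ∧ c = c' := by
  have hx : 0 < b + c - a := by linarith
  have hy : 0 < c + a - b := by linarith
  have hz : 0 < a + b - c := by linarith
  have hx' : 0 < b' + c' - a' := by linarith
  have hy' : 0 < c' + a' - b' := by linarith
  have hz' : 0 < a' + b' - c' := by linarith
  obtain ⟨ex, ey, ez⟩ := ravi_inj (b + c - a) (c + a - b) (a + b - c)
      (b' + c' - a') (c' + a' - b') (a' + b' - c') hx hy hz hx' hy' hz'
      (by rw [ravi_of_sides a b c ta tb tc, ravi_of_sides a' b' c' ta' tb' tc']; exact e1)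
      (by rw [ravi_of_sides b c a tb tc ta, ravi_of_sides b' c' a' tb' tc' ta']; exact e2)
      (by rw [ravi_of_sides c a b tc ta tb, ravi_of_sides c' a' b' tc' ta' tb']; exact e3)
  exact ⟨by linarith, by linarith, by linarith⟩

end BisectorAux

/-- The length of the internal angle bisector from vertex `A` in triangle `A B C`:
the distance from `A` to the point on `BC` dividing it in ratio `AB : AC`. -/
noncomputable def bisectorLength (A B C : EuclideanSpace ℝ (Fin 2)) : ℝ :=
  dist A (((dist C A) / (dist C A + dist A B)) • B + ((dist A B) / (dist C A + dist A B)) • C)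

section BisectorGeom

open RealInnerProductSpace

lemma scalar_id (a b c I : ℝ) (h : b + c ≠ 0) (hI : 2 * I = c ^ 2 + b ^ 2 - a ^ 2) :
    (b / (b + c) * c) ^ 2 + 2 * (b / (b + c) * (c / (b + c) * I)) + (c / (b + c) * b) ^ 2
      = b * c * ((b + c) ^ 2 - a ^ 2) / (b + c) ^ 2 := by
  rw [show I = (c ^ 2 + b ^ 2 - a ^ 2) / 2 by linarith]
  field_simp
  ring

lemma bisector_sq (A B C : EuclideanSpace ℝ (Fin 2)) (h0 : 0 < dist C A + dist A B) :
    (bisectorLength A B C) ^ 2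
      = dist C A * dist A B * ((dist C A + dist A B) ^ 2 - dist B C ^ 2)
        / (dist C A + dist A B) ^ 2 := by
  have hbc : dist C A + dist A B ≠ 0 := h0.ne'
  have hb0 : 0 ≤ dist C A := dist_nonneg
  have hc0 : 0 ≤ dist A B := dist_nonneg
  have hμν : dist C A / (dist C A + dist A B) + dist A B / (dist C A + dist A B) = 1 := by
    field_simp
  unfold bisectorLength
  rw [dist_eq_norm]
  have hAD : A - ((dist C A / (dist C A + dist A B)) • B + (dist A B / (dist C A + dist A B)) • C)
      = (dist C A / (dist C A + dist A B)) • (A - B)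
        + (dist A B / (dist C A + dist A B)) • (A - C) := by
    calc A - ((dist C A / (dist C A + dist A B)) • B + (dist A B / (dist C A + dist A B)) • C)
        = (dist C A / (dist C A + dist A B) + dist A B / (dist C A + dist A B)) • A
          - ((dist C A / (dist C A + dist A B)) • B + (dist A B / (dist C A + dist A B)) • C) := by
          rw [hμν, one_smul]
      _ = (dist C A / (dist C A + dist A B)) • (A - B)
          + (dist A B / (dist C A + dist A B)) • (A - C) := by
          rw [add_smul, smul_sub, smul_sub]; abel
  rw [hAD, norm_add_sq_real, real_inner_smul_left, real_inner_smul_right, norm_smul, norm_smul]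
  have hI : 2 * ⟪A - B, A - C⟫ = dist A B ^ 2 + dist C A ^ 2 - dist B C ^ 2 := by
    have e1 := norm_sub_sq_real (A - B) (A - C)
    rw [show (A - B) - (A - C) = C - B by abel] at e1
    rw [show ‖C - B‖ = dist B C by rw [← dist_eq_norm, dist_comm],
        show ‖A - B‖ = dist A B by rw [← dist_eq_norm],
        show ‖A - C‖ = dist C A by rw [← dist_eq_norm, dist_comm]] at e1
    linarith
  rw [show ‖A - B‖ = dist A B by rw [← dist_eq_norm],
      show ‖A - C‖ = dist C A by rw [← dist_eq_norm, dist_comm],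
      Real.norm_eq_abs, Real.norm_eq_abs,
      abs_of_nonneg (by positivity : (0:ℝ) ≤ dist C A / (dist C A + dist A B)),
      abs_of_nonneg (by positivity : (0:ℝ) ≤ dist A B / (dist C A + dist A B))]
  obtain ⟨I, hIdef⟩ : ∃ I : ℝ, (inner ℝ (A - B) (A - C) : ℝ) = I := ⟨_, rfl⟩
  rw [hIdef] at hI ⊢
  exact scalar_id (dist B C) (dist C A) (dist A B) I hbc hI

lemma strict_tri {A B C : EuclideanSpace ℝ (Fin 2)}
    (h : ¬ Collinear ℝ ({A, B, C} : Set (EuclideanSpace ℝ (Fin 2)))) :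
    dist B C < dist B A + dist A C := by
  rcases (dist_triangle B A C).lt_or_eq with hlt | heq
  · exact hlt
  · exfalso
    apply h
    have hw : Wbtw ℝ B A C := dist_add_dist_eq_iff.1 heq.symm
    have hc := hw.collinear
    rwa [Set.insert_comm] at hc

lemma noncollinear_perm {X Y Z : EuclideanSpace ℝ (Fin 2)}
    (h : ¬ Collinear ℝ ({X, Y, Z} : Set (EuclideanSpace ℝ (Fin 2)))) :
    ¬ Collinear ℝ ({Y, Z, X} : Set (EuclideanSpace ℝ (Fin 2))) := by
  intro hc
  apply h
  have : ({X, Y, Z} : Set (EuclideanSpace ℝ (Fin 2))) = {Y, Z, X} := by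
    ext p; simp only [Set.mem_insert_iff, Set.mem_singleton_iff]; tauto
  rwa [this]

end BisectorGeom

theorem triangle_determined_by_bisectors (A B C A' B' C' : EuclideanSpace ℝ (Fin 2))
    (h : ¬ Collinear ℝ ({A, B, C} : Set (EuclideanSpace ℝ (Fin 2))))
    (h' : ¬ Collinear ℝ ({A', B', C'} : Set (EuclideanSpace ℝ (Fin 2))))
    (htA : bisectorLength A B C = bisectorLength A' B' C')
    (htB : bisectorLength B C A = bisectorLength B' C' A')
    (htC : bisectorLength C A B = bisectorLength C' A' B') :
    dist B C = dist B' C' ∧ dist C A = dist C' A' ∧ dist A B = dist A' B' := by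
  have hB := noncollinear_perm h
  have hC := noncollinear_perm hB
  have hB' := noncollinear_perm h'
  have hC' := noncollinear_perm hB'
  -- strict triangle inequalities
  have ta : dist B C < dist C A + dist A B := by
    have := strict_tri h
    rw [dist_comm B A, dist_comm A C] at this
    linarith
  have tb : dist C A < dist A B + dist B C := by
    have := strict_tri hB
    rw [dist_comm C B, dist_comm B A] at this
    linarith
  have tc : dist A B < dist B C + dist C A := by
    have := strict_tri hC
    rw [dist_comm A C, dist_comm C B] at this
    linarith
  have ta' : dist B' C' < dist C' A' + dist A' B' := by
    have := strict_tri h'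
    rw [dist_comm B' A', dist_comm A' C'] at this
    linarith
  have tb' : dist C' A' < dist A' B' + dist B' C' := by
    have := strict_tri hB'
    rw [dist_comm C' B', dist_comm B' A'] at this
    linarith
  have tc' : dist A' B' < dist B' C' + dist C' A' := by
    have := strict_tri hC'
    rw [dist_comm A' C', dist_comm C' B'] at this
    linarith
  -- positivity of denominators
  have p1 : 0 < dist C A + dist A B := lt_of_le_of_lt dist_nonneg ta
  have p2 : 0 < dist A B + dist B C := lt_of_le_of_lt dist_nonneg tb
  have p3 : 0 < dist B C + dist C A := lt_of_le_of_lt dist_nonneg tc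
  have p1' : 0 < dist C' A' + dist A' B' := lt_of_le_of_lt dist_nonneg ta'
  have p2' : 0 < dist A' B' + dist B' C' := lt_of_le_of_lt dist_nonneg tb'
  have p3' : 0 < dist B' C' + dist C' A' := lt_of_le_of_lt dist_nonneg tc'
  -- squared bisector equalities in terms of side lengths
  have e1 : dist C A * dist A B * ((dist C A + dist A B) ^ 2 - dist B C ^ 2)
      / (dist C A + dist A B) ^ 2
      = dist C' A' * dist A' B' * ((dist C' A' + dist A' B') ^ 2 - dist B' C' ^ 2)
      / (dist C' A' + dist A' B') ^ 2 := by
    rw [← bisector_sq A B C p1, ← bisector_sq A' B' C' p1', htA]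
  have e2 : dist A B * dist B C * ((dist A B + dist B C) ^ 2 - dist C A ^ 2)
      / (dist A B + dist B C) ^ 2
      = dist A' B' * dist B' C' * ((dist A' B' + dist B' C') ^ 2 - dist C' A' ^ 2)
      / (dist A' B' + dist B' C') ^ 2 := by
    rw [← bisector_sq B C A p2, ← bisector_sq B' C' A' p2', htB]
  have e3 : dist B C * dist C A * ((dist B C + dist C A) ^ 2 - dist A B ^ 2)
      / (dist B C + dist C A) ^ 2
      = dist B' C' * dist C' A' * ((dist B' C' + dist C' A') ^ 2 - dist A' B' ^ 2)
      / (dist B' C' + dist C' A') ^ 2 := by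
    rw [← bisector_sq C A B p3, ← bisector_sq C' A' B' p3', htC]
  exact sides_eq (dist B C) (dist C A) (dist A B) (dist B' C') (dist C' A') (dist A' B')
    ta tb tc ta' tb' tc' e1 e2 e3
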